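/- Fix S ∈ A(s) and let S‡ := Φ(S). Define γ_S := n^{−1/2}(I − P_{X_S})μ* and γ_{S‡} := n^{−1/2}(I − P_{X_{S‡}})μ*. Then: (i) ‖γ_S − γ_{S‡}‖₂ ≤ n^{−1/2}(‖P_{S‡|S}μ*‖₂ + ‖P_{S|S‡}μ*‖₂); (ii) ‖γ_S‖₂² − ‖γ_{S‡}‖₂² = n^{−1}(‖P_{S‡|S}μ*‖₂ + ‖P_{S|S‡}μ*‖₂)(‖P_{S‡|S}μ*‖₂ − ‖P_{S|S‡}μ*‖₂); and consequently, (iii) if ‖P_{S‡|S}μ*‖₂ ≥ ‖P_{S|S‡}μ*‖₂, then ‖γ_S‖₂² − ‖γ_{S‡}‖₂² ≥ ‖γ_S − γ_{S‡}‖₂ · n^{−1/2}(‖P_{S‡|S}μ*‖₂ − ‖P_{S|S‡}μ*‖₂). -/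

import Mathlib

open MeasureTheory ProbabilityTheory Real Finset
open scoped NNReal ENNReal

noncomputable section

namespace Paper

/-- The `j`-th column of `X` as a vector in Euclidean space. -/
def col {n p : ℕ} (X : Matrix (Fin n) (Fin p) ℝ) (j : Fin p) : EuclideanSpace ℝ (Fin n) :=
  WithLp.toLp 2 (fun i => X i j)

/-- Column space of the submatrix `X_S`. -/
def colSpan {n p : ℕ} (X : Matrix (Fin n) (Fin p) ℝ) (S : Finset (Fin p)) :
    Submodule ℝ (EuclideanSpace ℝ (Fin n)) :=
  Submodule.span ℝ (col X '' (S : Set (Fin p)))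

/-- Orthogonal projection of `ℝ^n` onto the column space of `X_S`. -/
def proj {n p : ℕ} (X : Matrix (Fin n) (Fin p) ℝ) (S : Finset (Fin p))
    (v : EuclideanSpace ℝ (Fin n)) : EuclideanSpace ℝ (Fin n) :=
  (Submodule.orthogonalProjection (colSpan X S) v : EuclideanSpace ℝ (Fin n))

/-- The marginal projection operator `P_{S₁|S₂} = P_{X_{S₁}} - P_{X_{S₁ ∩ S₂}}`. -/
def margProj {n p : ℕ} (X : Matrix (Fin n) (Fin p) ℝ) (S₁ S₂ : Finset (Fin p))
    (v : EuclideanSpace ℝ (Fin n)) : EuclideanSpace ℝ (Fin n) :=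
  proj X S₁ v - proj X (S₁ ∩ S₂) v

/-- The true signal `μ* = X β*`. -/
def mu {n p : ℕ} (X : Matrix (Fin n) (Fin p) ℝ) (β : Fin p → ℝ) :
    EuclideanSpace ℝ (Fin n) :=
  WithLp.toLp 2 (fun i => ∑ j, X i j * β j)

/-- `A(s)`: size-`s` models containing at least one false variable. -/
def bigA {p : ℕ} (Sstar : Finset (Fin p)) (s : ℕ) : Set (Finset (Fin p)) :=
  {S | S.card = s ∧ (S \ Sstar).Nonempty}

/-- `A*(s)`: size-`s` models with no false variable. -/
def bigAstar {p : ℕ} (Sstar : Finset (Fin p)) (s : ℕ) : Set (Finset (Fin p)) :=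
  {S | S ⊆ Sstar ∧ S.card = s}

/-- `Φ` is an optimal feature swap at sparsity `s`. -/
def IsOptSwap {n p : ℕ} (X : Matrix (Fin n) (Fin p) ℝ) (β : Fin p → ℝ)
    (Sstar : Finset (Fin p)) (s : ℕ) (Φ : Finset (Fin p) → Finset (Fin p)) : Prop :=
  ∀ S ∈ bigA Sstar s, Φ S ∈ bigAstar Sstar s ∧ S ∩ Sstar ⊆ Φ S ∧
    ∀ T ∈ bigAstar Sstar s, S ∩ Sstar ⊆ T →
      ‖proj X T (mu X β)‖ ≤ ‖proj X (Φ S) (mu X β)‖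

/-- Projected signal margin `m(S)`. -/
def margin {n p : ℕ} (X : Matrix (Fin n) (Fin p) ℝ) (β : Fin p → ℝ)
    (Φ : Finset (Fin p) → Finset (Fin p)) (S : Finset (Fin p)) : ℝ :=
  (‖margProj X (Φ S) S (mu X β)‖ - ‖margProj X S (Φ S) (mu X β)‖) /
    Real.sqrt ((Φ S \ S).card)

/-- Minimum projected signal margin `m_*(s)`. -/
def minMargin {n p : ℕ} (X : Matrix (Fin n) (Fin p) ℝ) (β : Fin p → ℝ)
    (Sstar : Finset (Fin p)) (Φ : Finset (Fin p) → Finset (Fin p)) (s : ℕ) : ℝ :=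
  sInf (margin X β Φ '' bigA Sstar s)

/-- Residual sum of squares `L_S = yᵀ(I - P_{X_S})y`. -/
def lossL {n p : ℕ} (X : Matrix (Fin n) (Fin p) ℝ) (S : Finset (Fin p))
    (y : EuclideanSpace ℝ (Fin n)) : ℝ :=
  ‖y - proj X S y‖ ^ 2

/-- `L_* = min_{|S| = s} L_S`. -/
def lossStar {n p : ℕ} (X : Matrix (Fin n) (Fin p) ℝ) (s : ℕ)
    (y : EuclideanSpace ℝ (Fin n)) : ℝ :=
  sInf {l | ∃ S : Finset (Fin p), S.card = s ∧ l = lossL X S y}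

/-- The collection `𝕊(s, η)` of near best `s`-subsets, given a realization `y`. -/
def nearBest {n p : ℕ} (X : Matrix (Fin n) (Fin p) ℝ) (β : Fin p → ℝ)
    (Sstar : Finset (Fin p)) (Φ : Finset (Fin p) → Finset (Fin p)) (s : ℕ) (η : ℝ)
    (y : EuclideanSpace ℝ (Fin n)) : Set (Finset (Fin p)) :=
  {S | S.card = s ∧ lossL X S y ≤ lossStar X s y + η * (minMargin X β Sstar Φ s) ^ 2}

/-- False discovery proportion. -/
def fdp {p : ℕ} (Sstar S : Finset (Fin p)) : ℝ :=
  ((S \ Sstar).card : ℝ) / max (S.card : ℝ) 1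

/-- `γ_S = n^{-1/2} (I - P_{X_S}) μ*`. -/
def gammaV {n p : ℕ} (X : Matrix (Fin n) (Fin p) ℝ) (β : Fin p → ℝ)
    (S : Finset (Fin p)) : EuclideanSpace ℝ (Fin n) :=
  (Real.sqrt n)⁻¹ • (mu X β - proj X S (mu X β))

open scoped RealInnerProductSpace

lemma inner_proj_eq {n p : ℕ} (X : Matrix (Fin n) (Fin p) ℝ) (S : Finset (Fin p))
    (v w : EuclideanSpace ℝ (Fin n)) (hw : w ∈ colSpan X S) :
    ⟪proj X S v, w⟫ = ⟪v, w⟫ := by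
  have h := Submodule.starProjection_inner_eq_zero (K := colSpan X S) v w hw
  rw [inner_sub_left] at h
  have : ⟪v, w⟫ - ⟪proj X S v, w⟫ = 0 := h
  linarith

lemma colSpan_mono {n p : ℕ} (X : Matrix (Fin n) (Fin p) ℝ) {S₁ S₂ : Finset (Fin p)}
    (h : S₂ ⊆ S₁) : colSpan X S₂ ≤ colSpan X S₁ :=
  Submodule.span_mono (Set.image_mono (Finset.coe_subset.2 h))

lemma proj_mem {n p : ℕ} (X : Matrix (Fin n) (Fin p) ℝ) (S : Finset (Fin p))
    (v : EuclideanSpace ℝ (Fin n)) : proj X S v ∈ colSpan X S :=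
  (Submodule.orthogonalProjection (colSpan X S) v).2

/-- Pythagoras for nested projections. -/
lemma norm_sq_proj_nested {n p : ℕ} (X : Matrix (Fin n) (Fin p) ℝ)
    {S₁ S₂ : Finset (Fin p)} (h : S₂ ⊆ S₁) (v : EuclideanSpace ℝ (Fin n)) :
    ‖proj X S₁ v‖ ^ 2 = ‖proj X S₁ v - proj X S₂ v‖ ^ 2 + ‖proj X S₂ v‖ ^ 2 := by
  set w := proj X S₂ v with hw
  have hw₂ : w ∈ colSpan X S₂ := proj_mem X S₂ v
  have hw₁ : w ∈ colSpan X S₁ := colSpan_mono X h hw₂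
  have hiz : ⟪proj X S₁ v - w, w⟫ = 0 := by
    rw [inner_sub_left, inner_proj_eq X S₁ v w hw₁, hw, inner_proj_eq X S₂ v w hw₂,
      sub_self]
  have := norm_add_sq_real (proj X S₁ v - w) w
  rw [sub_add_cancel, hiz] at this
  linarith

/-- Pythagoras for the residual. -/
lemma norm_sq_residual {n p : ℕ} (X : Matrix (Fin n) (Fin p) ℝ)
    (S : Finset (Fin p)) (v : EuclideanSpace ℝ (Fin n)) :
    ‖v - proj X S v‖ ^ 2 = ‖v‖ ^ 2 - ‖proj X S v‖ ^ 2 := by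
  have hiz : ⟪v - proj X S v, proj X S v⟫ = 0 :=
    Submodule.starProjection_inner_eq_zero (K := colSpan X S) v _ (proj_mem X S v)
  have := norm_add_sq_real (v - proj X S v) (proj X S v)
  rw [sub_add_cancel, hiz] at this
  linarith

/-- Basic identities for the residual signals `γ_S` and `γ_{Φ(S)}`:
(i) `‖γ_S - γ_{S‡}‖ ≤ n^{-1/2}(‖P_{S‡|S}μ*‖ + ‖P_{S|S‡}μ*‖)`;
(ii) `‖γ_S‖² - ‖γ_{S‡}‖² = n^{-1}(‖P_{S‡|S}μ*‖ + ‖P_{S|S‡}μ*‖)(‖P_{S‡|S}μ*‖ - ‖P_{S|S‡}μ*‖)`;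
(iii) if `‖P_{S‡|S}μ*‖ ≥ ‖P_{S|S‡}μ*‖` then
`‖γ_S‖² - ‖γ_{S‡}‖² ≥ ‖γ_S - γ_{S‡}‖ · n^{-1/2}(‖P_{S‡|S}μ*‖ - ‖P_{S|S‡}μ*‖)`. -/

theorem gamma_identities {n p : ℕ} (hn : 0 < n) (X : Matrix (Fin n) (Fin p) ℝ)
    (β : Fin p → ℝ) (Sstar : Finset (Fin p)) (s : ℕ)
    (Φ : Finset (Fin p) → Finset (Fin p)) (S : Finset (Fin p))
    (hsupp : ∀ j, j ∈ Sstar ↔ β j ≠ 0)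
    (hΦ : IsOptSwap X β Sstar s Φ)
    (hS : S ∈ bigA Sstar s) :
    (‖gammaV X β S - gammaV X β (Φ S)‖ ≤
      (Real.sqrt n)⁻¹ *
        (‖margProj X (Φ S) S (mu X β)‖ + ‖margProj X S (Φ S) (mu X β)‖)) ∧
    (‖gammaV X β S‖ ^ 2 - ‖gammaV X β (Φ S)‖ ^ 2 =
      (n : ℝ)⁻¹ *
        ((‖margProj X (Φ S) S (mu X β)‖ + ‖margProj X S (Φ S) (mu X β)‖) *
          (‖margProj X (Φ S) S (mu X β)‖ - ‖margProj X S (Φ S) (mu X β)‖))) ∧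
    (‖margProj X S (Φ S) (mu X β)‖ ≤ ‖margProj X (Φ S) S (mu X β)‖ →
      ‖gammaV X β S - gammaV X β (Φ S)‖ *
          ((Real.sqrt n)⁻¹ *
            (‖margProj X (Φ S) S (mu X β)‖ - ‖margProj X S (Φ S) (mu X β)‖)) ≤
        ‖gammaV X β S‖ ^ 2 - ‖gammaV X β (Φ S)‖ ^ 2) := by
  classical
  set μ := mu X β with hμ
  set a := margProj X (Φ S) S μ with ha
  set b := margProj X S (Φ S) μ with hb
  set c := (Real.sqrt n)⁻¹ with hc
  have hcn : 0 ≤ c := by positivity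
  have hcc : c * c = (n : ℝ)⁻¹ := by
    rw [hc, ← mul_inv, Real.mul_self_sqrt (Nat.cast_nonneg n)]
  -- the common intersection term cancels
  have hab : a - b = proj X (Φ S) μ - proj X S μ := by
    rw [ha, hb, margProj, margProj, Finset.inter_comm S (Φ S)]
    abel
  have hdiff : gammaV X β S - gammaV X β (Φ S) = c • (a - b) := by
    rw [hab, gammaV, gammaV, ← smul_sub, ← hμ, ← hc]
    congr 1
    abel
  have hnormdiff : ‖gammaV X β S - gammaV X β (Φ S)‖ = c * ‖a - b‖ := by
    rw [hdiff, norm_smul, Real.norm_eq_abs, abs_of_nonneg hcn]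
  have h1 : ‖gammaV X β S - gammaV X β (Φ S)‖ ≤ c * (‖a‖ + ‖b‖) := by
    rw [hnormdiff]
    exact mul_le_mul_of_nonneg_left (norm_sub_le a b) hcn
  -- part (ii)
  have hsq : ∀ T : Finset (Fin p), ‖gammaV X β T‖ ^ 2 = c ^ 2 * (‖μ‖ ^ 2 - ‖proj X T μ‖ ^ 2) := by
    intro T
    rw [gammaV, norm_smul, mul_pow, Real.norm_eq_abs, sq_abs, ← hc, ← hμ,
      norm_sq_residual]
  have hA : ‖proj X (Φ S) μ‖ ^ 2 = ‖a‖ ^ 2 + ‖proj X (Φ S ∩ S) μ‖ ^ 2 := by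
    have := norm_sq_proj_nested X (Finset.inter_subset_left : Φ S ∩ S ⊆ Φ S) μ
    rw [this, ha, margProj]
  have hB : ‖proj X S μ‖ ^ 2 = ‖b‖ ^ 2 + ‖proj X (Φ S ∩ S) μ‖ ^ 2 := by
    have := norm_sq_proj_nested X (Finset.inter_subset_left : S ∩ Φ S ⊆ S) μ
    rw [this, hb, margProj, Finset.inter_comm S (Φ S)]
  have h2 : ‖gammaV X β S‖ ^ 2 - ‖gammaV X β (Φ S)‖ ^ 2 =
      (n : ℝ)⁻¹ * ((‖a‖ + ‖b‖) * (‖a‖ - ‖b‖)) := by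
    rw [hsq S, hsq (Φ S), ← hcc]
    ring_nf
    nlinarith [hA, hB]
  refine ⟨h1, h2, fun hle => ?_⟩
  have hnn : 0 ≤ c * (‖a‖ - ‖b‖) := mul_nonneg hcn (by linarith)
  calc ‖gammaV X β S - gammaV X β (Φ S)‖ * (c * (‖a‖ - ‖b‖))
      ≤ c * (‖a‖ + ‖b‖) * (c * (‖a‖ - ‖b‖)) := mul_le_mul_of_nonneg_right h1 hnn
    _ = (n : ℝ)⁻¹ * ((‖a‖ + ‖b‖) * (‖a‖ - ‖b‖)) := by rw [← hcc]; ring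
    _ = ‖gammaV X β S‖ ^ 2 - ‖gammaV X β (Φ S)‖ ^ 2 := h2.symm

end Paper
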